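/- For integers n, p ≥ 2, let S_{n,p} be the (p−1)-subdivision of the complete graph K_n, i.e. the graph obtained from K_n by replacing every edge by a path of length p through p−1 new internal vertices (the original vertices of K_n are called branch vertices). Then the exact distance-p graph of S_{n,p} satisfies χ(S_{n,p}^[♮p]) ≥ n, while the weak (p−1)-colouring number satisfies wcol_{p−1}(S_{n,p}) ≤ p+1. -/

import Mathlib

open SimpleGraph

variable {V : Type*}

/-- The exact distance-`p` graph: distinct vertices adjacent iff their distance in `G` is exactly `p`. -/
def exactDistanceGraph (G : SimpleGraph V) (p : ℕ) : SimpleGraph V where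
  Adj x y := x ≠ y ∧ G.Reachable x y ∧ G.dist x y = p
  symm := by
    constructor
    rintro x y ⟨h1, h2, h3⟩
    exact ⟨h1.symm, h2.symm, by rwa [SimpleGraph.dist_comm]⟩
  loopless := by constructor; rintro x ⟨h1, -, -⟩; exact h1 rfl

/-- `x` is weakly `k`-accessible from `y` w.r.t. the linear order `L`. -/
def WeaklyAccessible (G : SimpleGraph V) (L : LinearOrder V) (k : ℕ) (x y : V) : Prop :=
  L.lt x y ∧ ∃ w : G.Walk x y, w.IsPath ∧ w.length ≤ k ∧
    ∀ z ∈ w.support, z ≠ x → z ≠ y → L.lt x z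

/-- The weak `k`-colouring number. -/
noncomputable def wcol (G : SimpleGraph V) (k : ℕ) : ℕ :=
  1 + sInf { m : ℕ | ∃ L : LinearOrder V, ∀ y : V,
      {x : V | WeaklyAccessible G L k x y}.ncard ≤ m }

/-- The vertex type of the `(p-1)`-subdivision of `K_n`: the `n` branch vertices together with,
for each edge `{i,j}` (with `i < j`) of `K_n`, the `p-1` internal vertices of the path replacing
that edge. -/
abbrev SubdivisionVert (n p : ℕ) : Type :=
  Fin n ⊕ ({e : Fin n × Fin n // e.1 < e.2} × Fin (p - 1))

/-- The `(p-1)`-subdivision `S_{n,p}` of `K_n`: every edge `{i,j}` of `K_n` is replaced by the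
path `i, (e,0), (e,1), …, (e,p-2), j` of length `p`. -/
def subdividedComplete (n p : ℕ) : SimpleGraph (SubdivisionVert n p) :=
  SimpleGraph.fromRel (fun a b =>
    match a, b with
    | Sum.inl i, Sum.inr em =>
        (em.1.val.1 = i ∧ (em.2 : ℕ) = 0) ∨ (em.1.val.2 = i ∧ (em.2 : ℕ) = p - 2)
    | Sum.inr em, Sum.inr em' => em.1 = em'.1 ∧ (em'.2 : ℕ) = (em.2 : ℕ) + 1
    | _, _ => False)


section AuxProof

open SimpleGraph Walk

variable {n p : ℕ}

/-- Lower bound for the distance from branch vertex `i`. -/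
def lbAux (p : ℕ) {n : ℕ} (i : Fin n) : SubdivisionVert n p → ℕ
  | Sum.inl j => if (j : ℕ) = (i : ℕ) then 0 else p
  | Sum.inr em => if (em.1.val.1 : ℕ) = (i : ℕ) then (em.2 : ℕ) + 1
      else if (em.1.val.2 : ℕ) = (i : ℕ) then p - 1 - (em.2 : ℕ) else p

lemma lbAux_adj (hp : 2 ≤ p) (i : Fin n) {a b : SubdivisionVert n p}
    (h : (subdividedComplete n p).Adj a b) : lbAux p i b ≤ lbAux p i a + 1 := by
  rw [subdividedComplete, fromRel_adj] at h
  obtain ⟨hne, h⟩ := h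
  rcases a with j | ⟨e, m⟩ <;> rcases b with j' | ⟨e', m'⟩ <;>
    dsimp only at h <;> simp only [lbAux]
  · simp at h
  · have he : (e'.val.1 : ℕ) < (e'.val.2 : ℕ) := e'.prop
    have hm := m'.isLt
    rcases h with (⟨h1, h2⟩ | ⟨h1, h2⟩) | h
    · have h1' : (e'.val.1 : ℕ) = (j : ℕ) := congrArg Fin.val h1
      split_ifs <;> omega
    · have h1' : (e'.val.2 : ℕ) = (j : ℕ) := congrArg Fin.val h1
      split_ifs <;> omega
    · exact absurd h (by simp)
  · have he : (e.val.1 : ℕ) < (e.val.2 : ℕ) := e.prop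
    have hm := m.isLt
    rcases h with h | (⟨h1, h2⟩ | ⟨h1, h2⟩)
    · exact absurd h (by simp)
    · have h1' : (e.val.1 : ℕ) = (j' : ℕ) := congrArg Fin.val h1
      split_ifs <;> omega
    · have h1' : (e.val.2 : ℕ) = (j' : ℕ) := congrArg Fin.val h1
      split_ifs <;> omega
  · have hm := m.isLt
    have hm' := m'.isLt
    rcases h with ⟨h1, h2⟩ | ⟨h1, h2⟩
    · subst h1; split_ifs <;> omega
    · subst h1; split_ifs <;> omega

lemma lbAux_le_walk (hp : 2 ≤ p) (i : Fin n) {a b : SubdivisionVert n p}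
    (w : (subdividedComplete n p).Walk a b) : lbAux p i b ≤ lbAux p i a + w.length := by
  induction w with
  | nil => simp
  | cons hadj w ih =>
    have := lbAux_adj hp i hadj
    simp only [Walk.length_cons]
    omega
lemma subd_adj_iff {a b : SubdivisionVert n p} :
    (subdividedComplete n p).Adj a b ↔ a ≠ b ∧
      ((match a, b with
        | Sum.inl i, Sum.inr em =>
            (em.1.val.1 = i ∧ (em.2 : ℕ) = 0) ∨ (em.1.val.2 = i ∧ (em.2 : ℕ) = p - 2)
        | Sum.inr em, Sum.inr em' => em.1 = em'.1 ∧ (em'.2 : ℕ) = (em.2 : ℕ) + 1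
        | _, _ => False) ∨
       (match b, a with
        | Sum.inl i, Sum.inr em =>
            (em.1.val.1 = i ∧ (em.2 : ℕ) = 0) ∨ (em.1.val.2 = i ∧ (em.2 : ℕ) = p - 2)
        | Sum.inr em, Sum.inr em' => em.1 = em'.1 ∧ (em'.2 : ℕ) = (em.2 : ℕ) + 1
        | _, _ => False)) := by
  rw [subdividedComplete, fromRel_adj]

lemma exists_tail_walk (hp : 2 ≤ p) (e : {e : Fin n × Fin n // e.1 < e.2}) :
    ∀ d : ℕ, d ≤ p - 2 → ∃ w : (subdividedComplete n p).Walk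
      (Sum.inr (e, ⟨p - 2 - d, by omega⟩)) (Sum.inl e.val.2), w.length = d + 1 := by
  intro d
  induction d with
  | zero =>
    intro _
    have hadj : (subdividedComplete n p).Adj (Sum.inr (e, ⟨p - 2 - 0, by omega⟩)) (Sum.inl e.val.2) := by
      rw [subd_adj_iff]
      refine ⟨by simp, Or.inr ?_⟩
      exact Or.inr ⟨rfl, by simp⟩
    exact ⟨hadj.toWalk, by simp⟩
  | succ d ih =>
    intro hd
    obtain ⟨w, hw⟩ := ih (by omega)
    have hadj : (subdividedComplete n p).Adj (Sum.inr (e, ⟨p - 2 - (d+1), by omega⟩))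
        (Sum.inr (e, ⟨p - 2 - d, by omega⟩)) := by
      rw [subd_adj_iff]
      refine ⟨?_, Or.inl ⟨rfl, by simp; omega⟩⟩
      simp only [ne_eq, Sum.inr.injEq, Prod.mk.injEq, true_and]
      intro hfin
      have := congrArg Fin.val hfin
      simp at this; omega
    exact ⟨Walk.cons hadj w, by simp [hw]⟩

lemma exists_branch_walk (hp : 2 ≤ p) (e : {e : Fin n × Fin n // e.1 < e.2}) :
    ∃ w : (subdividedComplete n p).Walk (Sum.inl e.val.1) (Sum.inl e.val.2), w.length = p := by
  obtain ⟨w, hw⟩ := exists_tail_walk hp e (p - 2) le_rfl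
  have hadj : (subdividedComplete n p).Adj (Sum.inl e.val.1) (Sum.inr (e, ⟨p - 2 - (p-2), by omega⟩)) := by
    rw [subd_adj_iff]
    exact ⟨by simp, Or.inl (Or.inl ⟨rfl, by simp⟩)⟩
  exact ⟨Walk.cons hadj w, by simp [hw]; omega⟩

lemma dist_branch (hp : 2 ≤ p) {i j : Fin n} (hij : i ≠ j) :
    (subdividedComplete n p).Reachable (Sum.inl i) (Sum.inl j) ∧
      (subdividedComplete n p).dist (Sum.inl i) (Sum.inl j) = p := by
  have key : ∀ i j : Fin n, i < j →
      (subdividedComplete n p).Reachable (Sum.inl i) (Sum.inl j) ∧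
      (subdividedComplete n p).dist (Sum.inl i) (Sum.inl j) = p := by
    intro i j hij
    obtain ⟨w, hw⟩ := exists_branch_walk hp ⟨(i, j), hij⟩
    have hreach : (subdividedComplete n p).Reachable (Sum.inl i) (Sum.inl j) := ⟨w⟩
    refine ⟨hreach, le_antisymm (le_trans (SimpleGraph.dist_le w) (le_of_eq hw)) ?_⟩
    obtain ⟨w', hw'⟩ := hreach.exists_walk_length_eq_dist
    have h2 := lbAux_le_walk hp i w'
    have hval : (i : ℕ) < (j : ℕ) := hij
    simp only [lbAux] at h2
    split_ifs at h2 <;> omega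
  rcases lt_or_gt_of_ne hij with h | h
  · exact key i j h
  · obtain ⟨hr, hd⟩ := key j i h
    exact ⟨hr.symm, by rwa [SimpleGraph.dist_comm]⟩
lemma part1 (hn : 2 ≤ n) (hp : 2 ≤ p) :
    (n : ℕ∞) ≤ (exactDistanceGraph (subdividedComplete n p) p).chromaticNumber := by
  have hclique : (exactDistanceGraph (subdividedComplete n p) p).IsClique
      ((Finset.univ.image (Sum.inl : Fin n → SubdivisionVert n p)) : Finset _) := by
    intro a ha b hb hne
    simp only [Finset.coe_image, Finset.coe_univ, Set.image_univ, Set.mem_range] at ha hb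
    obtain ⟨i, rfl⟩ := ha; obtain ⟨j, rfl⟩ := hb
    have hij : i ≠ j := fun h => hne (by rw [h])
    obtain ⟨hr, hd⟩ := dist_branch hp hij
    exact ⟨hne, hr, hd⟩
  have h2 := hclique.card_le_chromaticNumber
  rwa [Finset.card_image_of_injective _ Sum.inl_injective, Finset.card_univ,
    Fintype.card_fin] at h2
noncomputable def keyFun (n p : ℕ) : SubdivisionVert n p → ℕ
  | Sum.inl i => (i : ℕ)
  | Sum.inr em => n + Encodable.encode em

lemma keyFun_inj : Function.Injective (keyFun n p) := by
  intro a b h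
  rcases a with i | em <;> rcases b with j | em' <;> simp only [keyFun] at h
  · exact congrArg Sum.inl (Fin.ext h)
  · exact absurd h (by have := i.isLt; omega)
  · exact absurd h (by have := j.isLt; omega)
  · exact congrArg Sum.inr (Encodable.encode_injective (by omega))

noncomputable def keyOrder (n p : ℕ) : LinearOrder (SubdivisionVert n p) :=
  LinearOrder.lift' (keyFun n p) keyFun_inj

lemma keyOrder_lt {a b : SubdivisionVert n p} :
    (keyOrder n p).lt a b ↔ keyFun n p a < keyFun n p b := Iff.rfl
def comp : SubdivisionVert n p → Option {e : Fin n × Fin n // e.1 < e.2}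
  | Sum.inl _ => none
  | Sum.inr em => some em.1

lemma comp_adj {a b : SubdivisionVert n p} (h : (subdividedComplete n p).Adj a b)
    (ha : a.isRight) (hb : b.isRight) : comp a = comp b := by
  rw [subd_adj_iff] at h
  obtain ⟨-, h⟩ := h
  rcases a with i | em <;> rcases b with j | em' <;> simp_all
  rcases h with ⟨h, -⟩ | ⟨h, -⟩ <;> simp [comp, h]

lemma comp_eq_of_walk {a b : SubdivisionVert n p} (w : (subdividedComplete n p).Walk a b)
    (h : ∀ z ∈ w.support, z.isRight) : comp a = comp b := by
  induction w with
  | nil => rfl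
  | cons hadj w ih =>
    rename_i u v x
    have h1 : comp u = comp v :=
      comp_adj hadj (h u (by simp)) (h v (by simp [Walk.support_cons]))
    exact h1.trans (ih fun z hz => h z (by simp [Walk.support_cons, hz]))
lemma part2 (hp : 2 ≤ p) : wcol (subdividedComplete n p) (p - 1) ≤ p + 1 := by
  have hmem : p ∈ { m : ℕ | ∃ L : LinearOrder (SubdivisionVert n p), ∀ y,
      {x | WeaklyAccessible (subdividedComplete n p) L (p-1) x y}.ncard ≤ m } := by
    refine ⟨keyOrder n p, fun y => ?_⟩
    rcases y with j | ⟨e, m⟩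
    · have hempty : {x | WeaklyAccessible (subdividedComplete n p) (keyOrder n p) (p-1)
          x (Sum.inl j)} = ∅ := by
        ext x; simp only [Set.mem_setOf_eq, Set.mem_empty_iff_false, iff_false]
        rintro ⟨hlt, w, hpath, hlen, hint⟩
        rw [keyOrder_lt] at hlt
        rcases x with i | em
        · have h2 := lbAux_le_walk hp i w
          simp only [keyFun] at hlt
          simp only [lbAux] at h2
          split_ifs at h2 <;> omega
        · simp only [keyFun] at hlt
          have := j.isLt; omega
      rw [hempty, Set.ncard_empty]
      omega
    · have hsub : {x | WeaklyAccessible (subdividedComplete n p) (keyOrder n p) (p-1)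
          x (Sum.inr (e, m))} ⊆
          insert (Sum.inl e.val.1) (insert (Sum.inl e.val.2)
            ((fun m' => (Sum.inr (e, m') : SubdivisionVert n p)) '' {m' | m' ≠ m})) := by
        rintro x ⟨hlt, w, hpath, hlen, hint⟩
        rw [keyOrder_lt] at hlt
        rcases x with c | ⟨e', m'⟩
        · -- branch vertex: must be an endpoint of e
          have h2 := lbAux_le_walk hp c w
          simp only [lbAux] at h2
          rw [if_pos trivial] at h2
          by_cases h1 : (e.val.1 : ℕ) = (c : ℕ)
          · exact Set.mem_insert_iff.mpr (Or.inl (congrArg Sum.inl (Fin.ext h1).symm))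
          · rw [if_neg h1] at h2
            by_cases hsnd : (e.val.2 : ℕ) = (c : ℕ)
            · exact Set.mem_insert_iff.mpr (Or.inr (Set.mem_insert_iff.mpr
                (Or.inl (congrArg Sum.inl (Fin.ext hsnd).symm))))
            · rw [if_neg hsnd] at h2; omega
        · -- internal vertex: same edge
          have hright : ∀ z ∈ w.support, z.isRight := by
            intro z hz
            by_cases hx : z = Sum.inr (e', m')
            · simp [hx]
            by_cases hy : z = Sum.inr (e, m)
            · simp [hy]
            have := hint z hz hx hy
            rw [keyOrder_lt] at this
            rcases z with c | em
            · simp only [keyFun] at this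
              have := c.isLt; omega
            · simp
          have hcomp := comp_eq_of_walk w hright
          simp only [comp, Option.some.injEq] at hcomp
          subst hcomp
          have hne : m' ≠ m := by
            rintro rfl
            exact lt_irrefl _ hlt
          exact Set.mem_insert_iff.mpr (Or.inr (Set.mem_insert_iff.mpr
            (Or.inr ⟨m', hne, rfl⟩)))
      have hcard := Set.ncard_le_ncard hsub (Set.toFinite _)
      have himg : ((fun m' => (Sum.inr (e, m') : SubdivisionVert n p)) '' {m' | m' ≠ m}).ncard
          = ({m' | m' ≠ m} : Set (Fin (p-1))).ncard :=
        Set.ncard_image_of_injective _ (fun a b h => by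
          simpa using h)
      have hset : ({m' | m' ≠ m} : Set (Fin (p-1))) = Set.univ \ {m} := by
        ext m'; simp
      have hcount : ({m' | m' ≠ m} : Set (Fin (p-1))).ncard = p - 2 := by
        rw [hset, Set.ncard_diff_singleton_of_mem (Set.mem_univ m), Set.ncard_univ,
          Nat.card_eq_fintype_card, Fintype.card_fin]
        omega
      have hb1 := Set.ncard_insert_le (Sum.inl e.val.1 : SubdivisionVert n p)
        (insert (Sum.inl e.val.2) ((fun m' => (Sum.inr (e, m') : SubdivisionVert n p)) '' {m' | m' ≠ m}))
      have hb2 := Set.ncard_insert_le (Sum.inl e.val.2 : SubdivisionVert n p)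
        ((fun m' => (Sum.inr (e, m') : SubdivisionVert n p)) '' {m' | m' ≠ m})
      omega
  have hinf := Nat.sInf_le hmem
  unfold wcol
  omega
end AuxProof

/-- For `n, p ≥ 2`, the exact distance-`p` graph of `S_{n,p}` has chromatic number at least `n`,
while `wcol_{p-1}(S_{n,p}) ≤ p + 1`. -/
theorem subdividedComplete_chromaticNumber_ge_and_wcol_le
    (n p : ℕ) (hn : 2 ≤ n) (hp : 2 ≤ p) :
    (n : ℕ∞) ≤ (exactDistanceGraph (subdividedComplete n p) p).chromaticNumber ∧
      wcol (subdividedComplete n p) (p - 1) ≤ p + 1 := by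
  exact ⟨part1 hn hp, part2 hp⟩
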